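/- For any N × N Hermitian matrices A and B, any real λ, any ε > 0, and any t > 0: μ_{(A+B)/t}(−∞, λ) ≤ μ_{A/t}(−∞, λ + ε√N/t) + ‖B‖_F² / (ε² N²), where μ_M denotes the empirical spectral measure (the uniform probability measure on the eigenvalues of M, with multiplicity) and ‖·‖_F the Frobenius norm. -/

import Mathlib

open Finset Matrix

variable {N : ℕ} {M : Matrix (Fin N) (Fin N) ℂ}

lemma repr_mulVec (hM : M.IsHermitian) (v : EuclideanSpace ℂ (Fin N)) (i : Fin N) :
    hM.eigenvectorBasis.repr (Matrix.toEuclideanLin M v) i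
      = hM.eigenvalues i * hM.eigenvectorBasis.repr v i := by
  unfold Matrix.IsHermitian.eigenvectorBasis Matrix.IsHermitian.eigenvalues
    Matrix.IsHermitian.eigenvalues₀
  rw [OrthonormalBasis.repr_reindex, OrthonormalBasis.repr_reindex]
  exact (Matrix.isHermitian_iff_isSymmetric.1 hM).eigenvectorBasis_apply_self_apply
    finrank_euclideanSpace v _

lemma quad_form_eq (hM : M.IsHermitian) (v : EuclideanSpace ℂ (Fin N)) :
    RCLike.re (inner ℂ v (Matrix.toEuclideanLin M v) : ℂ)
      = ∑ i, hM.eigenvalues i * ‖hM.eigenvectorBasis.repr v i‖ ^ 2 := by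
  rw [← hM.eigenvectorBasis.repr.inner_map_map v (Matrix.toEuclideanLin M v),
    PiLp.inner_apply, map_sum]
  refine Finset.sum_congr rfl fun i _ => ?_
  rw [repr_mulVec hM v i, RCLike.inner_apply]
  set r := hM.eigenvectorBasis.repr v i
  have h1 : (↑(hM.eigenvalues i) * r) * (starRingEnd ℂ) r
      = (hM.eigenvalues i : ℂ) * (r * (starRingEnd ℂ) r) := by ring
  rw [h1, Complex.mul_conj]
  simp [Complex.normSq_eq_norm_sq, ← Complex.ofReal_pow]

lemma norm_sq_eq (hM : M.IsHermitian) (v : EuclideanSpace ℂ (Fin N)) :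
    ‖v‖ ^ 2 = ∑ i, ‖hM.eigenvectorBasis.repr v i‖ ^ 2 := by
  rw [← hM.eigenvectorBasis.repr.norm_map v, EuclideanSpace.norm_eq,
    Real.sq_sqrt (by positivity)]


/-- The spectral subspace spanned by eigenvectors indexed by `s`. -/
noncomputable def specSpan (hM : M.IsHermitian) (s : Finset (Fin N)) :
    Submodule ℂ (EuclideanSpace ℂ (Fin N)) :=
  Submodule.span ℂ (Set.range (fun i : ↥s => hM.eigenvectorBasis i))

lemma finrank_specSpan (hM : M.IsHermitian) (s : Finset (Fin N)) :
    Module.finrank ℂ (specSpan hM s) = s.card := by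
  have hli : LinearIndependent ℂ (fun i : ↥s => hM.eigenvectorBasis i) :=
    hM.eigenvectorBasis.toBasis.linearIndependent.comp _ Subtype.val_injective
  rw [specSpan, finrank_span_eq_card hli, Fintype.card_coe]

lemma repr_eq_zero_of_mem_specSpan (hM : M.IsHermitian) (s : Finset (Fin N))
    {v : EuclideanSpace ℂ (Fin N)} (hv : v ∈ specSpan hM s) {i : Fin N} (hi : i ∉ s) :
    hM.eigenvectorBasis.repr v i = 0 := by
  let K : Submodule ℂ (EuclideanSpace ℂ (Fin N)) :=
    { carrier := {w | ∀ j ∉ s, hM.eigenvectorBasis.repr w j = 0}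
      add_mem' := fun ha hb j hj => by rw [map_add, PiLp.add_apply, ha j hj, hb j hj, add_zero]
      zero_mem' := fun j hj => by simp only [map_zero]; rfl
      smul_mem' := fun c w hw j hj => by rw [_root_.map_smul, PiLp.smul_apply, hw j hj, smul_zero] }
  have hKle : specSpan hM s ≤ K := by
    rw [specSpan, Submodule.span_le]
    rintro x ⟨j, rfl⟩
    intro k hk
    rw [OrthonormalBasis.repr_self]
    have : k ≠ (j : Fin N) := fun h => hk (h ▸ j.2)
    simp [EuclideanSpace.single_apply, this]
  exact hKle hv i hi

lemma quad_le_of_mem (hM : M.IsHermitian) (s : Finset (Fin N)) {c : ℝ}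
    (hc : ∀ i ∈ s, hM.eigenvalues i ≤ c) {v : EuclideanSpace ℂ (Fin N)}
    (hv : v ∈ specSpan hM s) :
    RCLike.re (inner ℂ v (Matrix.toEuclideanLin M v) : ℂ) ≤ c * ‖v‖ ^ 2 := by
  rw [quad_form_eq hM v, norm_sq_eq hM v, Finset.mul_sum]
  refine Finset.sum_le_sum fun i _ => ?_
  by_cases his : i ∈ s
  · exact mul_le_mul_of_nonneg_right (hc i his) (by positivity)
  · rw [repr_eq_zero_of_mem_specSpan hM s hv his]; simp

lemma le_quad_of_mem (hM : M.IsHermitian) (s : Finset (Fin N)) {c : ℝ}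
    (hc : ∀ i ∈ s, c ≤ hM.eigenvalues i) {v : EuclideanSpace ℂ (Fin N)}
    (hv : v ∈ specSpan hM s) :
    c * ‖v‖ ^ 2 ≤ RCLike.re (inner ℂ v (Matrix.toEuclideanLin M v) : ℂ) := by
  rw [quad_form_eq hM v, norm_sq_eq hM v, Finset.mul_sum]
  refine Finset.sum_le_sum fun i _ => ?_
  by_cases his : i ∈ s
  · exact mul_le_mul_of_nonneg_right (hc i his) (by positivity)
  · rw [repr_eq_zero_of_mem_specSpan hM s hv his]; simp

lemma lt_quad_of_mem (hM : M.IsHermitian) (s : Finset (Fin N)) {c : ℝ}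
    (hc : ∀ i ∈ s, c < hM.eigenvalues i) {v : EuclideanSpace ℂ (Fin N)}
    (hv : v ∈ specSpan hM s) (hv0 : v ≠ 0) :
    c * ‖v‖ ^ 2 < RCLike.re (inner ℂ v (Matrix.toEuclideanLin M v) : ℂ) := by
  rw [quad_form_eq hM v, norm_sq_eq hM v, Finset.mul_sum]
  obtain ⟨i0, hi0⟩ : ∃ i, hM.eigenvectorBasis.repr v i ≠ 0 := by
    by_contra h
    push_neg at h
    apply hv0
    have : hM.eigenvectorBasis.repr v = 0 := by
      ext i; exact h i
    simpa using hM.eigenvectorBasis.repr.map_eq_zero_iff.mp this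
  have hi0s : i0 ∈ s := by
    by_contra his
    exact hi0 (repr_eq_zero_of_mem_specSpan hM s hv his)
  refine Finset.sum_lt_sum (fun i _ => ?_) ⟨i0, Finset.mem_univ i0, ?_⟩
  · by_cases his : i ∈ s
    · exact mul_le_mul_of_nonneg_right (le_of_lt (hc i his)) (by positivity)
    · rw [repr_eq_zero_of_mem_specSpan hM s hv his]; simp
  · have hpos : (0:ℝ) < ‖hM.eigenvectorBasis.repr v i0‖ ^ 2 := by
      have := norm_pos_iff.mpr hi0
      positivity
    exact (mul_lt_mul_of_pos_right (hc i0 hi0s) hpos)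

lemma finrank_le_count (hC : M.IsHermitian) {δ : ℝ} (hδ : 0 < δ)
    (U : Submodule ℂ (EuclideanSpace ℂ (Fin N)))
    (hq : ∀ v ∈ U, RCLike.re (inner ℂ v (Matrix.toEuclideanLin M v) : ℂ) ≤ -δ * ‖v‖ ^ 2) :
    Module.finrank ℂ U ≤ (univ.filter (fun i => hC.eigenvalues i ≤ -δ)).card := by
  by_contra hcon
  push_neg at hcon
  set s3 : Finset (Fin N) := univ.filter (fun i => -δ < hC.eigenvalues i) with hs3
  have hs3card : (univ.filter (fun i => hC.eigenvalues i ≤ -δ)).card + s3.card = N := by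
    have h := Finset.card_filter_add_card_filter_not
      (s := (univ : Finset (Fin N))) (p := fun i => hC.eigenvalues i ≤ -δ)
    simp only [Finset.card_univ, Fintype.card_fin] at h
    have heq : s3 = univ.filter (fun i => ¬ hC.eigenvalues i ≤ -δ) := by
      apply Finset.filter_congr; intro i _; simp [not_le]
    rw [heq]; exact h
  set W := specSpan hC s3 with hW
  -- U ⊓ W is nontrivial
  have hdim : N < Module.finrank ℂ U + Module.finrank ℂ W := by
    have hWr : Module.finrank ℂ W = s3.card := by rw [hW, finrank_specSpan]
    omega
  have hne : U ⊓ W ≠ ⊥ := by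
    intro hbot
    have h1 := Submodule.finrank_sup_add_finrank_inf_eq U W
    rw [hbot] at h1
    simp only [finrank_bot, add_zero] at h1
    have h2 : Module.finrank ℂ ↥(U ⊔ W) ≤ N := by
      have := Submodule.finrank_le (U ⊔ W)
      simpa [finrank_euclideanSpace, Fintype.card_fin] using this
    omega
  obtain ⟨v, hvmem, hv0⟩ := Submodule.exists_mem_ne_zero_of_ne_bot hne
  have hvU : v ∈ U := hvmem.1
  have hvW : v ∈ W := hvmem.2
  have h1 := hq v hvU
  have h2 := lt_quad_of_mem hC s3 (fun i hi => by simpa [hs3] using hi) hvW hv0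
  linarith

lemma frobenius_eq_sum_sq (hC : M.IsHermitian) :
    ∑ i, ∑ j, ‖M i j‖ ^ 2 = ∑ i, hC.eigenvalues i ^ 2 := by
  have key : (M * M).trace = ∑ i, ((hC.eigenvalues i : ℂ)) ^ 2 := by
    conv_lhs => rw [hC.spectral_theorem]
    simp only [Unitary.conjStarAlgAut_apply, Unitary.coe_star]
    set U := (hC.eigenvectorUnitary : Matrix (Fin N) (Fin N) ℂ) with hU
    set D := diagonal ((RCLike.ofReal ∘ hC.eigenvalues : Fin N → ℂ)) with hD
    have hstar : star U * U = 1 := by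
      rw [hU]
      exact Unitary.coe_star_mul_self hC.eigenvectorUnitary
    have : U * D * star U * (U * D * star U) = U * (D * D) * star U := by
      rw [show U * D * star U * (U * D * star U) = U * D * (star U * U) * D * star U by
        noncomm_ring]
      rw [hstar]
      noncomm_ring
    rw [this, Matrix.trace_mul_cycle, ← mul_assoc, hstar, one_mul, hD,
      diagonal_mul_diagonal]
    rw [Matrix.trace_diagonal]
    simp [pow_two]
  have key2 : (M * M).trace = ∑ i, ∑ j, ((‖M i j‖ ^ 2 : ℝ) : ℂ) := by
    rw [Matrix.trace]
    refine Finset.sum_congr rfl fun i _ => ?_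
    rw [Matrix.diag_apply, Matrix.mul_apply]
    refine Finset.sum_congr rfl fun j _ => ?_
    have hji : M j i = (starRingEnd ℂ) (M i j) := by
      have h4 : Mᴴ j i = M j i := congrFun (congrFun hC j) i
      rw [Matrix.conjTranspose_apply] at h4
      exact h4.symm
    rw [hji, Complex.mul_conj]
    simp [Complex.normSq_eq_norm_sq, ← Complex.ofReal_pow]
  have h3 := key2.symm.trans key
  exact_mod_cast h3

/-- For `N × N` Hermitian matrices `A`, `B`, any `l : ℝ`, `ε > 0`, `t > 0`:
`μ_{(A+B)/t}(−∞, l) ≤ μ_{A/t}(−∞, l + ε√N/t) + ‖B‖_F²/(ε²N²)`, where `μ_M` is the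
empirical spectral measure. -/
theorem stmt8 (N : ℕ) (hN : 0 < N) (A B : Matrix (Fin N) (Fin N) ℂ)
    (hA : A.IsHermitian) (hB : B.IsHermitian) (l ε t : ℝ) (hε : 0 < ε) (ht : 0 < t)
    (hABt : (((t : ℂ)⁻¹) • (A + B)).IsHermitian)
    (hAt : (((t : ℂ)⁻¹) • A).IsHermitian) :
    ((univ.filter (fun i => hABt.eigenvalues i < l)).card : ℝ) / N ≤
      ((univ.filter (fun i => hAt.eigenvalues i < l + ε * Real.sqrt N / t)).card : ℝ) / N +
        (∑ i, ∑ j, ‖B i j‖ ^ 2) / (ε ^ 2 * N ^ 2) := by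
  classical
  have hNpos : (0:ℝ) < N := by exact_mod_cast hN
  set δ := ε * Real.sqrt N / t with hδdef
  have hδ : 0 < δ := by
    have h1 : 0 < Real.sqrt N := Real.sqrt_pos.mpr hNpos
    positivity
  set C := ((t:ℂ)⁻¹) • B with hCdef
  have hCeq : C = (((t:ℂ)⁻¹) • (A + B)) - (((t:ℂ)⁻¹) • A) := by
    rw [hCdef, smul_add, add_sub_cancel_left]
  have hC : C.IsHermitian := by
    rw [hCeq]; exact hABt.sub hAt
  set s1 := univ.filter (fun i => hABt.eigenvalues i < l) with hs1
  set s2 := univ.filter (fun i => hAt.eigenvalues i < l + δ) with hs2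
  set s2c := univ.filter (fun i => ¬ hAt.eigenvalues i < l + δ) with hs2c
  set kC := (univ.filter (fun i => hC.eigenvalues i ≤ -δ)).card with hkC
  set V := specSpan hABt s1 with hV
  set W := specSpan hAt s2c with hW
  -- quadratic form bound on V ⊓ W
  have hquad : ∀ v ∈ V ⊓ W,
      RCLike.re (inner ℂ v (Matrix.toEuclideanLin C v) : ℂ) ≤ -δ * ‖v‖ ^ 2 := by
    intro v hv
    have q1 : RCLike.re (inner ℂ v (Matrix.toEuclideanLin (((t:ℂ)⁻¹) • (A + B)) v) : ℂ)
        ≤ l * ‖v‖ ^ 2 :=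
      quad_le_of_mem hABt s1
        (fun i hi => le_of_lt (by simpa [hs1] using (Finset.mem_filter.mp hi).2)) hv.1
    have q2 : (l + δ) * ‖v‖ ^ 2
        ≤ RCLike.re (inner ℂ v (Matrix.toEuclideanLin (((t:ℂ)⁻¹) • A) v) : ℂ) :=
      le_quad_of_mem hAt s2c
        (fun i hi => not_lt.mp (by simpa [hs2c] using (Finset.mem_filter.mp hi).2)) hv.2
    have hinner : (inner ℂ v (Matrix.toEuclideanLin C v) : ℂ)
        = (inner ℂ v (Matrix.toEuclideanLin (((t:ℂ)⁻¹) • (A + B)) v) : ℂ)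
          - (inner ℂ v (Matrix.toEuclideanLin (((t:ℂ)⁻¹) • A) v) : ℂ) := by
      rw [hCeq, map_sub, LinearMap.sub_apply, inner_sub_right]
    have hre := congrArg RCLike.re hinner
    rw [map_sub] at hre
    nlinarith [sq_nonneg ‖v‖]
  have hcount : Module.finrank ℂ ↥(V ⊓ W) ≤ kC := finrank_le_count hC hδ _ hquad
  -- dimension counting
  have hVr : Module.finrank ℂ V = s1.card := finrank_specSpan hABt s1
  have hWr : Module.finrank ℂ W = s2c.card := finrank_specSpan hAt s2c
  have hsum2 : s2.card + s2c.card = N := by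
    have h := Finset.card_filter_add_card_filter_not
      (s := (univ : Finset (Fin N))) (p := fun i => hAt.eigenvalues i < l + δ)
    simpa [hs2, hs2c] using h
  have hsupinf := Submodule.finrank_sup_add_finrank_inf_eq V W
  have hsup : Module.finrank ℂ ↥(V ⊔ W) ≤ N := by
    have h := Submodule.finrank_le (V ⊔ W)
    simpa [finrank_euclideanSpace, Fintype.card_fin] using h
  have hk1 : s1.card ≤ s2.card + kC := by omega
  -- Frobenius norm bound
  have hfrob : ∑ i, hC.eigenvalues i ^ 2 = ∑ i, ∑ j, ‖C i j‖ ^ 2 :=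
    (frobenius_eq_sum_sq hC).symm
  have hCB : ∑ i, ∑ j, ‖C i j‖ ^ 2 = (∑ i, ∑ j, ‖B i j‖ ^ 2) / t ^ 2 := by
    rw [eq_div_iff (by positivity), Finset.sum_mul]
    refine Finset.sum_congr rfl fun i _ => ?_
    rw [Finset.sum_mul]
    refine Finset.sum_congr rfl fun j _ => ?_
    have : ‖C i j‖ = t⁻¹ * ‖B i j‖ := by
      rw [hCdef]
      simp only [Matrix.smul_apply, norm_smul, norm_inv, Complex.norm_real]
      rw [Real.norm_eq_abs, abs_of_pos ht]
    rw [this]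
    field_simp
  have hkCb : (kC : ℝ) * δ ^ 2 ≤ (∑ i, ∑ j, ‖B i j‖ ^ 2) / t ^ 2 := by
    rw [← hCB, ← hfrob]
    calc (kC : ℝ) * δ ^ 2
        = ∑ _i ∈ univ.filter (fun i => hC.eigenvalues i ≤ -δ), δ ^ 2 := by
          rw [Finset.sum_const, nsmul_eq_mul]
      _ ≤ ∑ i ∈ univ.filter (fun i => hC.eigenvalues i ≤ -δ), hC.eigenvalues i ^ 2 := by
          refine Finset.sum_le_sum fun i hi => ?_
          have h := (Finset.mem_filter.mp hi).2
          nlinarith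
      _ ≤ ∑ i, hC.eigenvalues i ^ 2 := by
          refine Finset.sum_le_sum_of_subset_of_nonneg (Finset.filter_subset _ _)
            fun i _ _ => by positivity
  have hδt : δ ^ 2 * t ^ 2 = ε ^ 2 * N := by
    rw [hδdef]
    rw [div_pow, div_mul_cancel₀ _ (by positivity), mul_pow, Real.sq_sqrt hNpos.le]
  have hF0 : (0:ℝ) ≤ ∑ i, ∑ j, ‖B i j‖ ^ 2 := by positivity
  have hkC2 : (kC : ℝ) ≤ (∑ i, ∑ j, ‖B i j‖ ^ 2) / (ε ^ 2 * N) := by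
    rw [le_div_iff₀ (by positivity)]
    calc (kC : ℝ) * (ε ^ 2 * N) = (kC : ℝ) * δ ^ 2 * t ^ 2 := by rw [← hδt]; ring
      _ ≤ (∑ i, ∑ j, ‖B i j‖ ^ 2) / t ^ 2 * t ^ 2 :=
          mul_le_mul_of_nonneg_right hkCb (by positivity)
      _ = ∑ i, ∑ j, ‖B i j‖ ^ 2 := by field_simp
  -- conclusion
  have hcast : (s1.card : ℝ) ≤ (s2.card : ℝ) + kC := by exact_mod_cast hk1
  calc (s1.card : ℝ) / N ≤ ((s2.card : ℝ) + (∑ i, ∑ j, ‖B i j‖ ^ 2) / (ε ^ 2 * N)) / N := by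
        gcongr
        linarith
      _ = (s2.card : ℝ) / N + (∑ i, ∑ j, ‖B i j‖ ^ 2) / (ε ^ 2 * N ^ 2) := by
        field_simp
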